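/- Let G be a finite connected vertex-transitive graph and let Δ ≤ Aut(G) be a transitive subgroup such that every prime dividing |Δ| is strictly greater than the maximum degree of G. Then Δ acts regularly on V(G), i.e., the point stabilizer of every vertex in Δ is trivial. -/

import Mathlib

open SimpleGraph

/-- The automorphism group of `G`, as a subgroup of the symmetric group on the vertices. -/
def autGroup {V : Type*} (G : SimpleGraph V) : Subgroup (Equiv.Perm V) where
  carrier := {σ | ∀ a b, G.Adj (σ a) (σ b) ↔ G.Adj a b}
  one_mem' := fun _ _ => Iff.rfl
  mul_mem' := by
    intro σ τ hσ hτ a b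
    rw [Equiv.Perm.mul_apply, Equiv.Perm.mul_apply]
    exact (hσ _ _).trans (hτ _ _)
  inv_mem' := by
    intro σ hσ a b
    rw [← hσ (σ⁻¹ a) (σ⁻¹ b), Equiv.Perm.coe_inv, Equiv.apply_symm_apply, Equiv.apply_symm_apply]

/-- Along a walk from a fixed point to a non-fixed point of `σ`, some edge has a
fixed endpoint and a non-fixed endpoint. -/
lemma stmt_11_aux {V : Type*} {G : SimpleGraph V} (σ : Equiv.Perm V) :
    ∀ {v w : V}, G.Walk v w → σ v = v → σ w ≠ w →
      ∃ a b, G.Adj a b ∧ σ a = a ∧ σ b ≠ b := by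
  intro v w p
  induction p with
  | nil => intro h1 h2; exact absurd h1 h2
  | @cons u x y h q ih =>
    intro hv hw
    by_cases hx : σ x = x
    · exact ih hx hw
    · exact ⟨u, x, h, hv, hx⟩

/-- a transitive subgroup `Δ ≤ Aut(G)` of a finite connected
vertex-transitive graph `G` all of whose prime divisors exceed the maximum degree of
`G` acts regularly: every point stabilizer is trivial. -/
theorem stmt_11 {V : Type*} [Fintype V] (G : SimpleGraph V) [DecidableRel G.Adj]
    (hconn : G.Connected)
    (hvt : ∀ v w : V, ∃ σ ∈ autGroup G, σ v = w)
    (Δ : Subgroup (Equiv.Perm V)) (hΔ : Δ ≤ autGroup G)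
    (htrans : ∀ v w : V, ∃ σ ∈ Δ, σ v = w)
    (hp : ∀ p : ℕ, p.Prime → p ∣ Nat.card Δ → G.maxDegree < p) :
    ∀ σ ∈ Δ, ∀ v : V, σ v = v → σ = 1 := by
  classical
  intro σ hσ v hv
  by_contra hne
  obtain ⟨w, hw⟩ : ∃ w, σ w ≠ w := by
    by_contra h; push_neg at h; exact hne (Equiv.ext h)
  obtain ⟨p⟩ := hconn v w
  obtain ⟨a, b, hab, ha, hb⟩ := stmt_11_aux σ p hv hw
  set S : Set V := MulAction.orbit (Subgroup.zpowers σ) b with hS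
  have hsub : S ⊆ G.neighborSet a := by
    rintro x ⟨⟨g, hg⟩, rfl⟩
    obtain ⟨n, rfl⟩ := hg
    have hga : (σ ^ n) a = a := Equiv.Perm.zpow_apply_eq_self_of_apply_eq_self ha n
    have hmem : (σ ^ n) ∈ autGroup G := Subgroup.zpow_mem _ (hΔ hσ) n
    have : G.Adj ((σ ^ n) a) ((σ ^ n) b) := (hmem a b).mpr hab
    rw [hga] at this
    exact this
  have hbS : b ∈ S := MulAction.mem_orbit_self b
  have hσbS : σ b ∈ S := ⟨⟨σ, Subgroup.mem_zpowers σ⟩, rfl⟩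
  have hfin : S.Finite := Set.toFinite S
  have h1 : 1 < S.ncard := (Set.one_lt_ncard_iff hfin).mpr ⟨σ b, b, hσbS, hbS, hb⟩
  have h2 : S.ncard ≤ G.maxDegree := by
    calc S.ncard ≤ (G.neighborSet a).ncard := Set.ncard_le_ncard hsub (Set.toFinite _)
    _ = G.degree a := by
        simp [Set.ncard_eq_toFinset_card', SimpleGraph.degree, SimpleGraph.neighborFinset]
    _ ≤ G.maxDegree := G.degree_le_maxDegree a
  have hdvd : S.ncard ∣ Nat.card Δ := by
    have h3 : Nat.card S ∣ Nat.card (Subgroup.zpowers σ) := by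
      rw [Nat.card_congr (MulAction.orbitEquivQuotientStabilizer (Subgroup.zpowers σ) b)]
      exact Subgroup.card_quotient_dvd_card _
    rw [← Nat.card_coe_set_eq]
    exact h3.trans ((Nat.card_zpowers σ) ▸ Subgroup.orderOf_dvd_natCard Δ hσ)
  have hpr : (S.ncard).minFac.Prime := Nat.minFac_prime (by omega)
  have hlt := hp _ hpr ((Nat.minFac_dvd _).trans hdvd)
  have hle : (S.ncard).minFac ≤ S.ncard := Nat.minFac_le (by omega)
  omega
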